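/- Let γ > 0, b > 0, and let β solve β'(t) = (2/(3t)) β(t) − (8b/3) t β(t)^{γ/2+1} on [t₀,∞) with β(t₀) > 0 (the case μ(t) = 1/t). Then t^{4/γ} β(t) → (4γb/(γ+6))^{-2/γ} as t → ∞. -/

import Mathlib

open Filter Real Set

lemma aux_uderiv (γ b t : ℝ) (β : ℝ → ℝ) (ht : 0 < t) (hbt : 0 < β t)
    (hd : HasDerivAt β ((2 / (3 * t)) * β t - (8 * b / 3) * t * β t ^ (γ / 2 + 1)) t) :
    HasDerivAt (fun s => β s ^ (-(γ/2))) (-(γ/(3*t)) * β t ^ (-(γ/2)) + (4*γ*b/3) * t) t := by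
  have h := hd.rpow_const (p := -(γ/2)) (Or.inl hbt.ne')
  convert h using 1
  have hb1 : β t ^ (-(γ/2) - 1) * β t = β t ^ (-(γ/2)) := by
    have h2 := Real.rpow_add_one hbt.ne' (-(γ/2) - 1)
    rw [sub_add_cancel] at h2
    exact h2.symm
  have hb2 : β t ^ (-(γ/2) - 1) * β t ^ (γ/2 + 1) = 1 := by
    rw [← Real.rpow_add hbt]; norm_num
  have htne : t ≠ 0 := ht.ne'
  field_simp
  rw [← hb1]
  linear_combination (norm := ring_nf) (-8*γ*b*t^2)*hb2

lemma aux_Fderiv (γ b t : ℝ) (β : ℝ → ℝ) (hγ : 0 < γ) (ht : 0 < t) (hbt : 0 < β t)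
    (hd : HasDerivAt β ((2 / (3 * t)) * β t - (8 * b / 3) * t * β t ^ (γ / 2 + 1)) t) :
    HasDerivAt (fun s => s ^ (γ/3) * β s ^ (-(γ/2)) - (4*γ*b/(γ+6)) * s ^ (γ/3+2)) 0 t := by
  have hu := aux_uderiv γ b t β ht hbt hd
  have h1 : HasDerivAt (fun s : ℝ => s ^ (γ/3)) (γ/3 * t ^ (γ/3 - 1)) t :=
    Real.hasDerivAt_rpow_const (Or.inl ht.ne')
  have h2 : HasDerivAt (fun s : ℝ => s ^ (γ/3+2)) ((γ/3+2) * t ^ (γ/3+2-1)) t :=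
    Real.hasDerivAt_rpow_const (Or.inl ht.ne')
  have h3 : HasDerivAt (fun s => s ^ (γ/3) * β s ^ (-(γ/2)) - (4*γ*b/(γ+6)) * s ^ (γ/3+2)) _ t :=
    (h1.mul hu).sub (h2.const_mul (4*γ*b/(γ+6)))
  convert h3 using 1
  have htne : t ≠ 0 := ht.ne'
  have hγ6 : γ + 6 ≠ 0 := by positivity
  have e1 : t ^ (γ/3 - 1) * t = t ^ (γ/3) := by
    have h4 := Real.rpow_add_one htne (γ/3 - 1)
    rw [sub_add_cancel] at h4
    exact h4.symm
  have e2 : t ^ (γ/3 + 2 - 1) = t ^ (γ/3) * t := by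
    rw [show (γ/3 + 2 - 1 : ℝ) = γ/3 + 1 by ring]
    exact Real.rpow_add_one htne _
  rw [e2, ← e1]
  field_simp
  ring

/-- if `β' = (2/(3t)) β − (8b/3) t β^{γ/2+1}` on `[t₀,∞)` with `β(t₀) > 0`,
then `t^{4/γ} β(t) → (4γb/(γ+6))^{−2/γ}` as `t → ∞`. -/
theorem stmt_13 (γ b t₀ : ℝ) (hγ : 0 < γ) (hb : 0 < b) (ht₀ : 0 < t₀)
    (β : ℝ → ℝ) (hβ₀ : 0 < β t₀)
    (hβ : ∀ t, t₀ ≤ t →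
      HasDerivAt β ((2 / (3 * t)) * β t - (8 * b / 3) * t * β t ^ (γ / 2 + 1)) t) :
    Tendsto (fun t : ℝ => t ^ ((4:ℝ) / γ) * β t) atTop
      (nhds ((4 * γ * b / (γ + 6)) ^ (-(2 / γ)))) := by
  set K : ℝ := 4 * γ * b / (γ + 6) with hK
  have hKpos : 0 < K := by positivity
  set F : ℝ → ℝ := fun s => s ^ (γ/3) * β s ^ (-(γ/2)) - K * s ^ (γ/3+2) with hF
  set C : ℝ := F t₀ with hC
  have hcβ : ∀ s, t₀ ≤ s → ContinuousAt β s := fun s hs => (hβ s hs).continuousAt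
  -- constancy of F on intervals of positivity
  have hconst : ∀ x, t₀ ≤ x → (∀ s ∈ Icc t₀ x, 0 < β s) → F x = C := by
    intro x hx hpos
    have hcont : ContinuousOn F (Icc t₀ x) := fun s hs =>
      ((aux_Fderiv γ b s β hγ (lt_of_lt_of_le ht₀ hs.1) (hpos s hs)
        (hβ s hs.1)).continuousAt).continuousWithinAt
    have hderiv : ∀ s ∈ Ico t₀ x, HasDerivWithinAt F 0 (Ici s) s := fun s hs =>
      (aux_Fderiv γ b s β hγ (lt_of_lt_of_le ht₀ hs.1) (hpos s ⟨hs.1, hs.2.le⟩)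
        (hβ s hs.1)).hasDerivWithinAt
    exact constant_of_has_deriv_right_zero hcont hderiv x (right_mem_Icc.mpr hx)
  -- positivity of β on [t₀, ∞)
  have hpos : ∀ t, t₀ ≤ t → 0 < β t := by
    by_contra hcon
    push_neg at hcon
    obtain ⟨t₁, ht₁, hbt₁⟩ := hcon
    set A : Set ℝ := {t | t₀ ≤ t ∧ β t ≤ 0} with hA
    have hAne : A.Nonempty := ⟨t₁, ht₁, hbt₁⟩
    have hAbdd : BddBelow A := ⟨t₀, fun a ha => ha.1⟩
    set s : ℝ := sInf A with hs
    have hst₀ : t₀ ≤ s := le_csInf hAne fun a ha => ha.1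
    -- β s ≤ 0
    have hβs : β s ≤ 0 := by
      have hcl : s ∈ closure A := csInf_mem_closure hAne hAbdd
      obtain ⟨u, hu, hus⟩ := mem_closure_iff_seq_limit.mp hcl
      have : Tendsto (fun n => β (u n)) atTop (nhds (β s)) :=
        ((hcβ s hst₀).tendsto).comp hus
      exact le_of_tendsto this (Eventually.of_forall fun n => (hu n).2)
    -- t₀ < s
    have hgt : t₀ < s := by
      have hev : ∀ᶠ x in nhds t₀, 0 < β x :=
        (hcβ t₀ le_rfl).eventually (eventually_gt_nhds hβ₀)
      obtain ⟨ε, hε, hball⟩ := Metric.eventually_nhds_iff.mp hev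
      have : t₀ + ε / 2 ≤ s := by
        apply le_csInf hAne
        intro a ha
        by_contra hlt
        push_neg at hlt
        have : dist a t₀ < ε := by
          rw [Real.dist_eq, abs_of_nonneg (by linarith [ha.1])]
          linarith
        exact absurd (hball this) (not_lt.mpr ha.2)
      linarith
    -- β positive on [t₀, s)
    have hIco : ∀ x ∈ Ico t₀ s, 0 < β x := by
      intro x hx
      by_contra hx0
      push_neg at hx0
      exact absurd (csInf_le hAbdd ⟨hx.1, hx0⟩) (not_le.mpr hx.2)
    -- formula on [t₀, s)
    have hform : ∀ x ∈ Ico t₀ s, β x = ((C + K * x ^ (γ/3+2)) / x ^ (γ/3)) ^ (-(2/γ)) := by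
      intro x hx
      have hxpos : 0 < x := lt_of_lt_of_le ht₀ hx.1
      have hbx : 0 < β x := hIco x hx
      have hFx : F x = C := hconst x hx.1 fun u hu =>
        hIco u ⟨hu.1, lt_of_le_of_lt hu.2 hx.2⟩
      have hxne : x ^ (γ/3) ≠ 0 := (Real.rpow_pos_of_pos hxpos _).ne'
      have hE : β x ^ (-(γ/2)) = (C + K * x ^ (γ/3+2)) / x ^ (γ/3) := by
        rw [eq_div_iff hxne]
        simp only [hF] at hFx
        linarith [hFx]
      rw [← hE]
      rw [← Real.rpow_mul hbx.le]
      rw [show -(γ/2) * -(2/γ) = 1 by field_simp, Real.rpow_one]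
    -- the limit value at s is positive
    have hqpos : 0 < C + K * s ^ (γ/3+2) := by
      have h1 : C + K * t₀ ^ (γ/3+2) = t₀ ^ (γ/3) * β t₀ ^ (-(γ/2)) := by
        simp only [hC, hF]; ring
      have h2 : 0 < C + K * t₀ ^ (γ/3+2) := by
        rw [h1]
        exact mul_pos (Real.rpow_pos_of_pos ht₀ _) (Real.rpow_pos_of_pos hβ₀ _)
      have h3 : t₀ ^ (γ/3+2) ≤ s ^ (γ/3+2) :=
        Real.rpow_le_rpow ht₀.le hst₀ (by positivity)
      nlinarith
    have hspos : 0 < s := lt_of_lt_of_le ht₀ hst₀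
    -- continuity of the explicit formula at s
    set φ : ℝ → ℝ := fun x => ((C + K * x ^ (γ/3+2)) / x ^ (γ/3)) ^ (-(2/γ)) with hφ
    have hφcont : ContinuousAt φ s := by
      have h1 : ContinuousAt (fun x : ℝ => (C + K * x ^ (γ/3+2)) / x ^ (γ/3)) s := by
        apply ContinuousAt.div
        · exact continuousAt_const.add (continuousAt_const.mul
            (Real.continuousAt_rpow_const s _ (Or.inl hspos.ne')))
        · exact Real.continuousAt_rpow_const s _ (Or.inl hspos.ne')
        · exact (Real.rpow_pos_of_pos hspos _).ne'
      exact h1.rpow_const (Or.inl (by positivity))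
    have hφtend : Tendsto φ (nhdsWithin s (Iio s)) (nhds (φ s)) :=
      (hφcont.tendsto).mono_left nhdsWithin_le_nhds
    have hβtend : Tendsto β (nhdsWithin s (Iio s)) (nhds (β s)) :=
      ((hcβ s hst₀).tendsto).mono_left nhdsWithin_le_nhds
    have hev : ∀ᶠ x in nhdsWithin s (Iio s), β x = φ x := by
      filter_upwards [Ioo_mem_nhdsLT_of_mem (⟨hgt, le_rfl⟩ : s ∈ Ioc t₀ s)] with x hx
      exact hform x ⟨hx.1.le, hx.2⟩
    have hβφ : β s = φ s := tendsto_nhds_unique (hβtend.congr' hev) hφtend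
    have : 0 < φ s := Real.rpow_pos_of_pos (div_pos hqpos (Real.rpow_pos_of_pos hspos _)) _
    rw [← hβφ] at this
    linarith
  -- the formula holds everywhere, and positivity of C + K t^(γ/3+2)
  have hform : ∀ t, t₀ ≤ t → β t ^ (-(γ/2)) = (C + K * t ^ (γ/3+2)) / t ^ (γ/3) ∧
      0 < C + K * t ^ (γ/3+2) := by
    intro t ht
    have htpos : 0 < t := lt_of_lt_of_le ht₀ ht
    have hFt : F t = C := hconst t ht fun u hu => hpos u hu.1
    have hxne : t ^ (γ/3) ≠ 0 := (Real.rpow_pos_of_pos htpos _).ne'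
    constructor
    · rw [eq_div_iff hxne]
      simp only [hF] at hFt
      linarith [hFt]
    · have : C + K * t ^ (γ/3+2) = t ^ (γ/3) * β t ^ (-(γ/2)) := by
        simp only [hF] at hFt ⊢
        linarith [hFt]
      rw [this]
      exact mul_pos (Real.rpow_pos_of_pos htpos _) (Real.rpow_pos_of_pos (hpos t ht) _)
  -- final limit computation
  have hkey : ∀ t, t₀ ≤ t →
      t ^ ((4:ℝ)/γ) * β t = (K + C * t ^ (-(γ/3+2))) ^ (-(2/γ)) := by
    intro t ht
    have htpos : 0 < t := lt_of_lt_of_le ht₀ ht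
    obtain ⟨hE, hD⟩ := hform t ht
    have hβt : 0 < β t := hpos t ht
    have hβform : β t = ((C + K * t ^ (γ/3+2)) / t ^ (γ/3)) ^ (-(2/γ)) := by
      rw [← hE, ← Real.rpow_mul hβt.le, show -(γ/2) * -(2/γ) = 1 by field_simp,
        Real.rpow_one]
    have i2 : t ^ (-(γ/3+2)) * t ^ ((γ/3+2):ℝ) = 1 := by
      rw [← Real.rpow_add htpos, show -(γ/3+2) + (γ/3+2) = (0:ℝ) by ring, Real.rpow_zero]
    have hPpos : 0 < K + C * t ^ (-(γ/3+2)) := by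
      have hmul : (K + C * t ^ (-(γ/3+2))) * t ^ ((γ/3+2):ℝ) = C + K * t ^ (γ/3+2) := by
        linear_combination C * i2
      have h3 : 0 < t ^ ((γ/3+2):ℝ) := Real.rpow_pos_of_pos htpos _
      have h2 : 0 < (K + C * t ^ (-(γ/3+2))) * t ^ ((γ/3+2):ℝ) := by
        rw [hmul]; exact hD
      have h4 := div_pos h2 h3
      rwa [mul_div_assoc, div_self h3.ne', mul_one] at h4
    have hxne : t ^ (γ/3) ≠ 0 := (Real.rpow_pos_of_pos htpos _).ne'
    have i1 : t ^ ((2:ℝ)) * t ^ (γ/3) = t ^ (γ/3+2) := by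
      rw [← Real.rpow_add htpos]; congr 1; ring
    have hsplit : (C + K * t ^ (γ/3+2)) / t ^ (γ/3)
        = (K + C * t ^ (-(γ/3+2))) * t ^ ((2:ℝ)) := by
      rw [div_eq_iff hxne]
      linear_combination (-K - C * t ^ (-(γ/3+2))) * i1 - C * i2
    rw [hβform, hsplit, Real.mul_rpow hPpos.le (Real.rpow_nonneg htpos.le _),
      ← Real.rpow_mul htpos.le]
    have i3 : t ^ ((4:ℝ)/γ) * t ^ ((2:ℝ) * -(2/γ)) = 1 := by
      rw [← Real.rpow_add htpos, show (4:ℝ)/γ + 2 * -(2/γ) = 0 by ring, Real.rpow_zero]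
    linear_combination (K + C * t ^ (-(γ/3+2))) ^ (-(2/γ)) * i3
  -- limit
  have hev : (fun t : ℝ => t ^ ((4:ℝ)/γ) * β t)
      =ᶠ[atTop] fun t => (K + C * t ^ (-(γ/3+2))) ^ (-(2/γ)) := by
    filter_upwards [eventually_ge_atTop t₀] with t ht
    exact hkey t ht
  have h0 : Tendsto (fun t : ℝ => t ^ (-(γ/3+2))) atTop (nhds 0) :=
    tendsto_rpow_neg_atTop (by positivity)
  have h1 : Tendsto (fun t : ℝ => K + C * t ^ (-(γ/3+2))) atTop (nhds K) := by
    have h := (h0.const_mul C).const_add K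
    simpa using h
  have h2 : Tendsto (fun t : ℝ => (K + C * t ^ (-(γ/3+2))) ^ (-(2/γ))) atTop
      (nhds (K ^ (-(2/γ)))) :=
    ((Real.continuousAt_rpow_const K (-(2/γ)) (Or.inl hKpos.ne')).tendsto).comp h1
  exact Tendsto.congr' hev.symm h2
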